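/- Condition D'_q fails at the neutral fixed point: let α ∈ (0,1), μ the acip of the LSV map f, and Uₙ = [0,bₙ) with μ(Uₙ) ∼ τ/n for fixed τ > 0. Then with aₙ defined by f(aₙ) = bₙ, one has Uₙ ∩ f^{−1}(Uₙ) ⊇ [0,aₙ) and n·μ(Uₙ ∩ f^{−1}(Uₙ)) ≥ n·μ([0,aₙ)), which is bounded below by a positive constant for all large n (since μ([0,aₙ)) ∼_c aₙ^{1−α} ∼_c 1/n). -/

import Mathlib

open Set Filter Topology MeasureTheory

lemma lsv_density_lb (α C₀ : ℝ) (hα0 : 0 < α) (hα1 : α < 1) (h : ℝ → ℝ)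
    (δ : ℝ) (hδ : ∀ t : ℝ, 0 < t → t < δ → C₀/2 ≤ h t * t^α)
    (x : ℝ) (hx : 0 < x) (hxδ : x < δ) (hC₀ : 0 < C₀) :
    ENNReal.ofReal ((C₀/2) * x^(1-α)) ≤
      (volume.withDensity (fun y => ENNReal.ofReal (h y))) (Set.Ico 0 x) := by
  rw [withDensity_apply _ measurableSet_Ico]
  have key : ∀ t ∈ Ioo (0:ℝ) x, ENNReal.ofReal ((C₀/2) * x^(-α)) ≤ ENNReal.ofReal (h t) := by
    intro t ht
    apply ENNReal.ofReal_le_ofReal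
    have htpos := ht.1
    have htα : (0:ℝ) < t ^ α := Real.rpow_pos_of_pos htpos α
    have h1 : C₀/2 ≤ h t * t^α := hδ t htpos (ht.2.trans hxδ)
    have h2 : (C₀/2) * t^(-α) ≤ h t := by
      rw [Real.rpow_neg htpos.le, mul_comm, ← div_eq_inv_mul, div_le_iff₀ htα]
      linarith [h1]
    refine le_trans ?_ h2
    apply mul_le_mul_of_nonneg_left _ (by positivity)
    rw [Real.rpow_neg htpos.le, Real.rpow_neg hx.le]
    exact inv_anti₀ htα (Real.rpow_le_rpow htpos.le ht.2.le hα0.le)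
  calc ENNReal.ofReal ((C₀/2) * x^(1-α))
      = ENNReal.ofReal ((C₀/2) * x^(-α)) * volume (Ioo (0:ℝ) x) := by
        rw [Real.volume_Ioo, sub_zero, ← ENNReal.ofReal_mul (by positivity)]
        congr 1
        rw [mul_assoc]
        congr 1
        rw [show (1-α) = -α+1 by ring, Real.rpow_add_one hx.ne']
    _ = ∫⁻ _ in Ioo (0:ℝ) x, ENNReal.ofReal ((C₀/2) * x^(-α)) := (setLIntegral_const _ _).symm
    _ ≤ ∫⁻ t in Ioo (0:ℝ) x, ENNReal.ofReal (h t) := setLIntegral_mono' measurableSet_Ioo key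
    _ ≤ ∫⁻ t in Ico (0:ℝ) x, ENNReal.ofReal (h t) := lintegral_mono_set Ioo_subset_Ico_self

lemma lsv_density_ub (α C₀ : ℝ) (hα0 : 0 < α) (hα1 : α < 1) (h : ℝ → ℝ)
    (δ : ℝ) (hδ : ∀ t : ℝ, 0 < t → t < δ → h t * t^α ≤ 2*C₀)
    (x : ℝ) (hx : 0 < x) (hxδ : x < δ) (hC₀ : 0 < C₀) :
    (volume.withDensity (fun y => ENNReal.ofReal (h y))) (Set.Ico 0 x) ≤
      ENNReal.ofReal (2*C₀/(1-α) * x^(1-α)) := by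
  rw [withDensity_apply _ measurableSet_Ico]
  have hint : IntegrableOn (fun t : ℝ => 2*C₀ * t^(-α)) (Ioo 0 x) volume := by
    have := (intervalIntegral.intervalIntegrable_rpow' (a := 0) (b := x)
      (by linarith : (-1:ℝ) < -α)).1
    exact ((this.mono_set Ioo_subset_Ioc_self).const_mul (2*C₀))
  have hval : ∫ t in Ioo (0:ℝ) x, 2*C₀ * t^(-α) = 2*C₀/(1-α) * x^(1-α) := by
    rw [integral_const_mul, ← integral_Ioc_eq_integral_Ioo,
      ← intervalIntegral.integral_of_le hx.le,
      integral_rpow (Or.inl (by linarith : (-1:ℝ) < -α))]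
    rw [Real.zero_rpow (by intro hc; linarith [hc] : -α + 1 ≠ 0)]
    rw [show -α + 1 = 1 - α by ring]
    field_simp
    rw [sub_zero]
  calc ∫⁻ t in Ico (0:ℝ) x, ENNReal.ofReal (h t)
      = ∫⁻ t in Ioo (0:ℝ) x, ENNReal.ofReal (h t) := (setLIntegral_congr Ioo_ae_eq_Ico).symm
    _ ≤ ∫⁻ t in Ioo (0:ℝ) x, ENNReal.ofReal (2*C₀ * t^(-α)) := by
        apply setLIntegral_mono' measurableSet_Ioo
        intro t ht
        apply ENNReal.ofReal_le_ofReal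
        have htpos := ht.1
        have htα : (0:ℝ) < t ^ α := Real.rpow_pos_of_pos htpos α
        have h1 : h t * t^α ≤ 2*C₀ := hδ t htpos (ht.2.trans hxδ)
        rw [Real.rpow_neg htpos.le, mul_comm (2*C₀), ← div_eq_inv_mul, le_div_iff₀ htα]
        exact h1
    _ = ENNReal.ofReal (∫ t in Ioo (0:ℝ) x, 2*C₀ * t^(-α)) := by
        rw [ofReal_integral_eq_lintegral_ofReal hint]
        filter_upwards [ae_restrict_mem measurableSet_Ioo] with t ht
        have : (0:ℝ) ≤ t ^ (-α) := Real.rpow_nonneg ht.1.le _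
        positivity
    _ = ENNReal.ofReal (2*C₀/(1-α) * x^(1-α)) := by rw [hval]

theorem Dq_prime_fails_at_neutral_fixed_point
    (α C₀ τ : ℝ) (hα : α ∈ Set.Ioo (0:ℝ) 1) (hC₀ : 0 < C₀) (hτ : 0 < τ)
    (f : ℝ → ℝ)
    (hf : ∀ x : ℝ, f x = if x < 1/2 then x * (1 + 2^α * x^α) else 2*x - 1)
    (h : ℝ → ℝ) (hmeas : Measurable h)
    (hpos : ∀ x ∈ Set.Ioc (0:ℝ) 1, 0 < h x)
    (hlim : Tendsto (fun x : ℝ => h x * x^α) (nhdsWithin 0 (Set.Ioi 0)) (nhds C₀))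
    (μ : Measure ℝ)
    (hμ : μ = volume.withDensity (fun x => ENNReal.ofReal (h x)))
    (b a : ℕ → ℝ)
    (hb : ∀ n, b n ∈ Set.Ioo (0:ℝ) (1/2))
    (ha : ∀ n, a n ∈ Set.Ioo (0:ℝ) (b n))
    (hfa : ∀ n, f (a n) = b n)
    (hU : Tendsto (fun n : ℕ => (n : ℝ) * (μ (Set.Ico 0 (b n))).toReal)
      atTop (nhds τ)) :
    (∀ n, Set.Ico (0:ℝ) (a n) ⊆ Set.Ico (0:ℝ) (b n) ∩ f ⁻¹' (Set.Ico (0:ℝ) (b n))) ∧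
    (∃ c : ℝ, 0 < c ∧ ∃ N : ℕ, ∀ n ≥ N,
      c ≤ (n : ℝ) * (μ (Set.Ico (0:ℝ) (b n) ∩ f ⁻¹' (Set.Ico (0:ℝ) (b n)))).toReal ∧
      (n : ℝ) * (μ (Set.Ico (0:ℝ) (a n))).toReal ≤
        (n : ℝ) * (μ (Set.Ico (0:ℝ) (b n) ∩ f ⁻¹' (Set.Ico (0:ℝ) (b n)))).toReal) := by
  obtain ⟨hα0, hα1⟩ := hα
  have h2α : (0:ℝ) < 2^α := Real.rpow_pos_of_pos (by norm_num) α
  -- Part 1: the inclusion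
  have part1 : ∀ n, Set.Ico (0:ℝ) (a n) ⊆
      Set.Ico (0:ℝ) (b n) ∩ f ⁻¹' (Set.Ico (0:ℝ) (b n)) := by
    intro n x hx
    obtain ⟨hx0, hxa⟩ := hx
    have han := ha n
    have hbn := hb n
    have hx12 : x < 1/2 := lt_trans (lt_trans hxa han.2) hbn.2
    have ha12 : a n < 1/2 := han.2.trans hbn.2
    have hxα : (0:ℝ) ≤ x^α := Real.rpow_nonneg hx0 α
    have haα : (0:ℝ) ≤ (a n)^α := Real.rpow_nonneg han.1.le α
    refine ⟨⟨hx0, hxa.trans han.2⟩, ?_⟩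
    simp only [Set.mem_preimage, Set.mem_Ico]
    rw [hf x, if_pos hx12]
    have hp1 : (0:ℝ) ≤ 2^α * x^α := mul_nonneg h2α.le hxα
    have hp2 : (0:ℝ) ≤ 2^α * (a n)^α := mul_nonneg h2α.le haα
    constructor
    · exact mul_nonneg hx0 (by linarith)
    · rw [← hfa n, hf (a n), if_pos ha12]
      have hxαa : x^α ≤ (a n)^α := Real.rpow_le_rpow hx0 hxa.le hα0.le
      calc x * (1 + 2^α * x^α) ≤ x * (1 + 2^α * (a n)^α) := by
            apply mul_le_mul_of_nonneg_left _ hx0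
            have := mul_le_mul_of_nonneg_left hxαa h2α.le
            linarith
        _ < a n * (1 + 2^α * (a n)^α) := by
            apply mul_lt_mul_of_pos_right hxa
            linarith
  refine ⟨part1, ?_⟩
  -- b n ≤ 2 a n
  have hab : ∀ n, b n ≤ 2 * a n := by
    intro n
    have han := ha n
    have hbn := hb n
    have ha12 : a n < 1/2 := han.2.trans hbn.2
    have hfa' : b n = a n * (1 + 2^α * (a n)^α) := by rw [← hfa n, hf, if_pos ha12]
    have h1 : (a n)^α ≤ (1/2:ℝ)^α := Real.rpow_le_rpow han.1.le ha12.le hα0.le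
    have h2 : (2:ℝ)^α * (1/2:ℝ)^α = 1 := by
      rw [← Real.mul_rpow (by norm_num) (by norm_num)]
      norm_num
    rw [hfa']
    nlinarith [mul_le_mul_of_nonneg_left h1 h2α.le, han.1]
  -- bounds on density from hlim
  obtain ⟨δ, hδpos, hδ⟩ := Metric.tendsto_nhdsWithin_nhds.mp hlim (C₀/2) (by positivity)
  have hlow : ∀ t : ℝ, 0 < t → t < δ → C₀/2 ≤ h t * t^α := by
    intro t ht htδ
    have := hδ (Set.mem_Ioi.mpr ht) (by rw [Real.dist_eq, sub_zero, abs_of_pos ht]; exact htδ)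
    rw [Real.dist_eq] at this
    have := abs_lt.mp this
    linarith [this.1]
  have hhigh : ∀ t : ℝ, 0 < t → t < δ → h t * t^α ≤ 2*C₀ := by
    intro t ht htδ
    have := hδ (Set.mem_Ioi.mpr ht) (by rw [Real.dist_eq, sub_zero, abs_of_pos ht]; exact htδ)
    rw [Real.dist_eq] at this
    have := abs_lt.mp this
    linarith [this.2]
  -- μ(Ico 0 (b n)) → 0 in toReal
  have htend0 : Tendsto (fun n : ℕ => (μ (Set.Ico 0 (b n))).toReal) atTop (nhds 0) := by
    have hn1 : Tendsto (fun n : ℕ => ((n:ℝ))⁻¹) atTop (nhds 0) :=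
      tendsto_inv_atTop_zero.comp tendsto_natCast_atTop_atTop
    have hmul := hn1.mul hU
    rw [zero_mul] at hmul
    apply hmul.congr'
    filter_upwards [eventually_ge_atTop 1] with n hn
    have hne : ((n:ℝ)) ≠ 0 := by
      have : (1:ℝ) ≤ (n:ℝ) := by exact_mod_cast hn
      linarith
    show ((n:ℝ))⁻¹ * ((n:ℝ) * _) = _
    rw [← mul_assoc, inv_mul_cancel₀ hne, one_mul]
  set ε : ℝ := δ/2 with hεdef
  have hε : 0 < ε := by positivity
  have hεδ : ε < δ := by simp only [hεdef]; linarith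
  set m : ℝ := (C₀/2) * ε^(1-α) with hmdef
  have hεp : (0:ℝ) < ε^(1-α) := Real.rpow_pos_of_pos hε _
  have hm : 0 < m := by positivity
  have E1 : ∀ᶠ n : ℕ in atTop, (μ (Set.Ico 0 (b n))).toReal < m :=
    htend0.eventually (eventually_lt_nhds hm)
  have E2 : ∀ᶠ n : ℕ in atTop, τ/2 < (n:ℝ) * (μ (Set.Ico 0 (b n))).toReal :=
    hU.eventually (eventually_gt_nhds (by linarith))
  obtain ⟨N, hN⟩ := Filter.eventually_atTop.mp (E1.and E2)
  have h12p : (0:ℝ) < ((1:ℝ)/2)^(1-α) := Real.rpow_pos_of_pos (by norm_num) _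
  set c : ℝ := (C₀/2) * ((1:ℝ)/2)^(1-α) * ((1-α)/(2*C₀)) * (τ/2) with hcdef
  have hc : 0 < c := by
    apply mul_pos (mul_pos (mul_pos (by positivity) h12p)
      (div_pos (by linarith) (by linarith)))
    linarith
  refine ⟨c, hc, N, ?_⟩
  intro n hn
  obtain ⟨h1n, h2n⟩ := hN n hn
  have hbn := hb n
  have han := ha n
  -- b n < δ
  have hbδ : b n < δ := by
    by_contra hcon
    push_neg at hcon
    have hfin : μ (Set.Ico 0 (b n)) ≠ ⊤ := by
      intro htop
      rw [htop, ENNReal.toReal_top, mul_zero] at h2n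
      linarith
    have hle : ENNReal.ofReal m ≤ μ (Set.Ico 0 (b n)) := by
      rw [hμ]
      refine le_trans (lsv_density_lb α C₀ hα0 hα1 h δ hlow ε hε hεδ hC₀) ?_
      exact measure_mono (Set.Ico_subset_Ico_right (le_trans hεδ.le hcon))
    have := ENNReal.toReal_mono hfin hle
    rw [ENNReal.toReal_ofReal hm.le] at this
    linarith
  have haδ : a n < δ := han.2.trans hbδ
  have hBfin : μ (Set.Ico 0 (b n)) ≠ ⊤ := by
    rw [hμ]
    exact ne_top_of_le_ne_top ENNReal.ofReal_ne_top
      (lsv_density_ub α C₀ hα0 hα1 h δ hhigh (b n) hbn.1 hbδ hC₀)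
  have hIfin : μ (Set.Ico (0:ℝ) (b n) ∩ f ⁻¹' (Set.Ico (0:ℝ) (b n))) ≠ ⊤ :=
    ne_top_of_le_ne_top hBfin (measure_mono Set.inter_subset_left)
  have hbp : (0:ℝ) ≤ (b n)^(1-α) := Real.rpow_nonneg hbn.1.le _
  have hBub : (μ (Set.Ico 0 (b n))).toReal ≤ 2*C₀/(1-α) * (b n)^(1-α) := by
    apply ENNReal.toReal_le_of_le_ofReal
      (mul_nonneg (le_of_lt (div_pos (by linarith) (by linarith))) hbp)
    rw [hμ]
    exact lsv_density_ub α C₀ hα0 hα1 h δ hhigh (b n) hbn.1 hbδ hC₀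
  have hAfin : μ (Set.Ico 0 (a n)) ≠ ⊤ :=
    ne_top_of_le_ne_top hBfin (measure_mono (Set.Ico_subset_Ico_right han.2.le))
  have hAlb : (C₀/2) * (a n)^(1-α) ≤ (μ (Set.Ico 0 (a n))).toReal := by
    have hle : ENNReal.ofReal ((C₀/2) * (a n)^(1-α)) ≤ μ (Set.Ico 0 (a n)) := by
      rw [hμ]
      exact lsv_density_lb α C₀ hα0 hα1 h δ hlow (a n) han.1 haδ hC₀
    have := ENNReal.toReal_mono hAfin hle
    rwa [ENNReal.toReal_ofReal
      (mul_nonneg (by positivity) (Real.rpow_nonneg han.1.le _))] at this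
  have hst : (μ (Set.Ico (0:ℝ) (a n))).toReal ≤
      (μ (Set.Ico (0:ℝ) (b n) ∩ f ⁻¹' (Set.Ico (0:ℝ) (b n)))).toReal :=
    ENNReal.toReal_mono hIfin (measure_mono (part1 n))
  have hpq : ((1:ℝ)/2)^(1-α) * (b n)^(1-α) ≤ (a n)^(1-α) := by
    have hba : b n / 2 ≤ a n := by linarith [hab n]
    have h1 : (b n / 2)^(1-α) ≤ (a n)^(1-α) :=
      Real.rpow_le_rpow (by linarith [hbn.1]) hba (by linarith)
    have h2 : (b n / 2)^(1-α) = ((1:ℝ)/2)^(1-α) * (b n)^(1-α) := by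
      rw [show b n / 2 = (1/2) * b n by ring, Real.mul_rpow (by norm_num) hbn.1.le]
    linarith [h1, h2.symm.le]
  set nn : ℝ := (n:ℝ) with hnndef
  have hnn0 : (0:ℝ) ≤ nn := Nat.cast_nonneg n
  set r : ℝ := (μ (Set.Ico 0 (b n))).toReal with hrdef
  set s : ℝ := (μ (Set.Ico (0:ℝ) (a n))).toReal with hsdef
  set t : ℝ := (μ (Set.Ico (0:ℝ) (b n) ∩ f ⁻¹' (Set.Ico (0:ℝ) (b n)))).toReal with htdef
  have hr0 : 0 ≤ r := ENNReal.toReal_nonneg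
  have r' : (1-α)/(2*C₀) * r ≤ (b n)^(1-α) := by
    have hd : (0:ℝ) ≤ (1-α)/(2*C₀) := le_of_lt (div_pos (by linarith) (by linarith))
    have hone : (1-α)/(2*C₀) * (2*C₀/(1-α)) = 1 := by
      have h1 : (1-α) ≠ 0 := by linarith
      have h2 : (2*C₀) ≠ 0 := by linarith
      field_simp
    calc (1-α)/(2*C₀) * r ≤ (1-α)/(2*C₀) * (2*C₀/(1-α) * (b n)^(1-α)) :=
          mul_le_mul_of_nonneg_left hBub hd
      _ = ((1-α)/(2*C₀) * (2*C₀/(1-α))) * (b n)^(1-α) := by ring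
      _ = (b n)^(1-α) := by rw [hone, one_mul]
  have hA0 : (0:ℝ) ≤ (C₀/2) * ((1:ℝ)/2)^(1-α) * ((1-α)/(2*C₀)) :=
    le_of_lt (mul_pos (mul_pos (by positivity) h12p) (div_pos (by linarith) (by linarith)))
  have step1 : c ≤ (C₀/2) * ((1:ℝ)/2)^(1-α) * ((1-α)/(2*C₀)) * (nn * r) := by
    rw [hcdef]
    exact mul_le_mul_of_nonneg_left (le_of_lt h2n) hA0
  have step2 : (C₀/2) * ((1:ℝ)/2)^(1-α) * ((1-α)/(2*C₀)) * (nn * r) ≤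
      nn * ((C₀/2) * (((1:ℝ)/2)^(1-α) * (b n)^(1-α))) := by
    have hkey := mul_le_mul_of_nonneg_left r'
      (mul_nonneg hnn0 (mul_nonneg (by positivity) h12p.le))
    linarith [hkey]
  have step3 : nn * ((C₀/2) * (((1:ℝ)/2)^(1-α) * (b n)^(1-α))) ≤
      nn * ((C₀/2) * (a n)^(1-α)) := by
    apply mul_le_mul_of_nonneg_left _ hnn0
    apply mul_le_mul_of_nonneg_left hpq (by positivity : (0:ℝ) ≤ C₀/2)
  have step4 : nn * ((C₀/2) * (a n)^(1-α)) ≤ nn * s := mul_le_mul_of_nonneg_left hAlb hnn0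
  have step5 : nn * s ≤ nn * t := mul_le_mul_of_nonneg_left hst hnn0
  exact ⟨by linarith, step5⟩
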